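/- arXiv:1002.2871 — 2 statements merged into one kernel-verified Lean document; each statement's English description precedes it below -/
import Mathlib

section
/- Every depth-respecting bisimulation between stable configuration structures is a step bisimulation; hence depth-respecting bisimulation equivalence is included in step bisimulation equivalence. -/
universe u v

/-- A configuration structure over event type `E` and label alphabet `L`:
a family of finite sets of events (configurations) with a labelling. -/
structure CS (E : Type u) (L : Type v) where
  C : Set (Set E)
  finite : ∀ X ∈ C, X.Finite
  label : E → L

namespace CS

variable {E E₁ E₂ : Type u} {L : Type v}

/-- Stability: rooted, connected, closed under bounded unions and intersections. -/
def IsStable (𝒞 : CS E L) : Prop :=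
  ∅ ∈ 𝒞.C ∧
  (∀ X ∈ 𝒞.C, X ≠ ∅ → ∃ e ∈ X, X \ {e} ∈ 𝒞.C) ∧
  (∀ X ∈ 𝒞.C, ∀ Y ∈ 𝒞.C, ∀ Z ∈ 𝒞.C, X ∪ Y ⊆ Z → X ∪ Y ∈ 𝒞.C) ∧
  (∀ X ∈ 𝒞.C, ∀ Y ∈ 𝒞.C, ∀ Z ∈ 𝒞.C, X ∪ Y ⊆ Z → X ∩ Y ∈ 𝒞.C)

/-- Causality: `d ≤_X e` iff every sub-configuration of `X` containing `e` contains `d`. -/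
def le (𝒞 : CS E L) (X : Set E) (d e : E) : Prop :=
  ∀ Y ∈ 𝒞.C, Y ⊆ X → e ∈ Y → d ∈ Y

/-- Strict causality `d <_X e`. -/
def lt (𝒞 : CS E L) (X : Set E) (d e : E) : Prop :=
  le 𝒞 X d e ∧ d ≠ e

/-- Concurrency within a configuration. -/
def co (𝒞 : CS E L) (X : Set E) (d e : E) : Prop :=
  ¬ lt 𝒞 X d e ∧ ¬ lt 𝒞 X e d

/-- The set of minimal events of a configuration. -/
def minE (𝒞 : CS E L) (X : Set E) : Set E :=
  {e | e ∈ X ∧ ∀ d ∈ X, ¬ lt 𝒞 X d e}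

/-- Depth of an event in a configuration: the length of the longest
causal chain (w.r.t. `<_X`) in `X` up to and including `e`. -/
noncomputable def depth (𝒞 : CS E L) (X : Set E) (e : E) : ℕ :=
  sSup {n | ∃ l : List E, l.length = n ∧ l.Chain' (lt 𝒞 X) ∧
    (∀ x ∈ l, x ∈ X) ∧ l.getLast? = some e}

/-- Multiset of labels of a (finite) set of events. -/
noncomputable def labelMS (𝒞 : CS E L) (S : Set E) : Multiset L := by
  classical exact if h : S.Finite then h.toFinset.val.map 𝒞.label else 0

/-- Single-event forward transition `X —a→ X'`. -/
def FTrans (𝒞 : CS E L) (a : L) (X X' : Set E) : Prop :=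
  X ∈ 𝒞.C ∧ X' ∈ 𝒞.C ∧ X ⊆ X' ∧ ∃ e, X' \ X = {e} ∧ 𝒞.label e = a

/-- Single-event reverse transition `X ⇝a X'`. -/
def RTrans (𝒞 : CS E L) (a : L) (X X' : Set E) : Prop :=
  FTrans 𝒞 a X' X

/-- Step transition `X —A→ X'`: the added events are pairwise concurrent
in `X'` and carry the label multiset `A`. -/
def Step (𝒞 : CS E L) (A : Multiset L) (X X' : Set E) : Prop :=
  X ∈ 𝒞.C ∧ X' ∈ 𝒞.C ∧ X ⊆ X' ∧ ∃ F : Finset E, ↑F = X' \ X ∧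
    (∀ d ∈ F, ∀ e ∈ F, co 𝒞 X' d e) ∧ F.val.map 𝒞.label = A

/-- Reverse step transition `X ⇝A X'`. -/
def RStep (𝒞 : CS E L) (A : Multiset L) (X X' : Set E) : Prop :=
  Step 𝒞 A X' X

/-- Equidepth step: all added events have the same depth in `X'`. -/
def EqStep (𝒞 : CS E L) (A : Multiset L) (X X' : Set E) : Prop :=
  Step 𝒞 A X X' ∧ ∀ d ∈ X' \ X, ∀ e ∈ X' \ X, depth 𝒞 X' d = depth 𝒞 X' e

/-- Reverse equidepth step `X ⇝A= X'`. -/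
def REqStep (𝒞 : CS E L) (A : Multiset L) (X X' : Set E) : Prop :=
  EqStep 𝒞 A X' X

/-- Single-event forward transition with depth: the new event has label `a`
and depth `k` in `X'`. -/
def FTransD (𝒞 : CS E L) (a : L) (k : ℕ) (X X' : Set E) : Prop :=
  X ∈ 𝒞.C ∧ X' ∈ 𝒞.C ∧ X ⊆ X' ∧
    ∃ e, X' \ X = {e} ∧ 𝒞.label e = a ∧ depth 𝒞 X' e = k

/-- Single-event reverse transition with depth. -/
def RTransD (𝒞 : CS E L) (a : L) (k : ℕ) (X X' : Set E) : Prop :=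
  FTransD 𝒞 a k X' X

/-- A multiset of labels is homogeneous if all its elements are equal. -/
def Hom (A : Multiset L) : Prop := ∀ a ∈ A, ∀ b ∈ A, a = b

/-- `R` is a relation between configurations of `𝒞` and `𝒟`, containing `(∅, ∅)`. -/
def Dom (𝒞 : CS E₁ L) (𝒟 : CS E₂ L) (R : Set E₁ → Set E₂ → Prop) : Prop :=
  R ∅ ∅ ∧ ∀ X Y, R X Y → X ∈ 𝒞.C ∧ Y ∈ 𝒟.C

/-- Interleaving bisimulation. -/
def IsIB (𝒞 : CS E₁ L) (𝒟 : CS E₂ L) (R : Set E₁ → Set E₂ → Prop) : Prop :=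
  Dom 𝒞 𝒟 R ∧ ∀ X Y, R X Y →
    (∀ a X', FTrans 𝒞 a X X' → ∃ Y', FTrans 𝒟 a Y Y' ∧ R X' Y') ∧
    (∀ a Y', FTrans 𝒟 a Y Y' → ∃ X', FTrans 𝒞 a X X' ∧ R X' Y')

/-- Reverse bisimulation: an IB also matching reverse single-event transitions. -/
def IsRB (𝒞 : CS E₁ L) (𝒟 : CS E₂ L) (R : Set E₁ → Set E₂ → Prop) : Prop :=
  IsIB 𝒞 𝒟 R ∧ ∀ X Y, R X Y →
    (∀ a X', RTrans 𝒞 a X X' → ∃ Y', RTrans 𝒟 a Y Y' ∧ R X' Y') ∧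
    (∀ a Y', RTrans 𝒟 a Y Y' → ∃ X', RTrans 𝒞 a X X' ∧ R X' Y')

/-- Step bisimulation. -/
def IsSB (𝒞 : CS E₁ L) (𝒟 : CS E₂ L) (R : Set E₁ → Set E₂ → Prop) : Prop :=
  Dom 𝒞 𝒟 R ∧ ∀ X Y, R X Y →
    (∀ A X', Step 𝒞 A X X' → ∃ Y', Step 𝒟 A Y Y' ∧ R X' Y') ∧
    (∀ A Y', Step 𝒟 A Y Y' → ∃ X', Step 𝒞 A X X' ∧ R X' Y')

/-- Reverse step bisimulation: an SB also matching reverse steps. -/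
def IsRSB (𝒞 : CS E₁ L) (𝒟 : CS E₂ L) (R : Set E₁ → Set E₂ → Prop) : Prop :=
  IsSB 𝒞 𝒟 R ∧ ∀ X Y, R X Y →
    (∀ A X', RStep 𝒞 A X X' → ∃ Y', RStep 𝒟 A Y Y' ∧ R X' Y') ∧
    (∀ A Y', RStep 𝒟 A Y Y' → ∃ X', RStep 𝒞 A X X' ∧ R X' Y')

/-- Reverse homogeneous step bisimulation: matches forward single-event
transitions and reverse homogeneous steps. -/
def IsRHSB (𝒞 : CS E₁ L) (𝒟 : CS E₂ L) (R : Set E₁ → Set E₂ → Prop) : Prop :=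
  Dom 𝒞 𝒟 R ∧ ∀ X Y, R X Y →
    (∀ a X', FTrans 𝒞 a X X' → ∃ Y', FTrans 𝒟 a Y Y' ∧ R X' Y') ∧
    (∀ a Y', FTrans 𝒟 a Y Y' → ∃ X', FTrans 𝒞 a X X' ∧ R X' Y') ∧
    (∀ A X', Hom A → RStep 𝒞 A X X' → ∃ Y', RStep 𝒟 A Y Y' ∧ R X' Y') ∧
    (∀ A Y', Hom A → RStep 𝒟 A Y Y' → ∃ X', RStep 𝒞 A X X' ∧ R X' Y')

/-- Reverse homogeneous equidepth step bisimulation. -/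
def IsRHESB (𝒞 : CS E₁ L) (𝒟 : CS E₂ L) (R : Set E₁ → Set E₂ → Prop) : Prop :=
  Dom 𝒞 𝒟 R ∧ ∀ X Y, R X Y →
    (∀ a X', FTrans 𝒞 a X X' → ∃ Y', FTrans 𝒟 a Y Y' ∧ R X' Y') ∧
    (∀ a Y', FTrans 𝒟 a Y Y' → ∃ X', FTrans 𝒞 a X X' ∧ R X' Y') ∧
    (∀ A X', Hom A → REqStep 𝒞 A X X' → ∃ Y', REqStep 𝒟 A Y Y' ∧ R X' Y') ∧
    (∀ A Y', Hom A → REqStep 𝒟 A Y Y' → ∃ X', REqStep 𝒞 A X X' ∧ R X' Y')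

/-- Depth-respecting bisimulation. -/
def IsDB (𝒞 : CS E₁ L) (𝒟 : CS E₂ L) (R : Set E₁ → Set E₂ → Prop) : Prop :=
  Dom 𝒞 𝒟 R ∧ ∀ X Y, R X Y →
    (∀ a k X', FTransD 𝒞 a k X X' → ∃ Y', FTransD 𝒟 a k Y Y' ∧ R X' Y') ∧
    (∀ a k Y', FTransD 𝒟 a k Y Y' → ∃ X', FTransD 𝒞 a k X X' ∧ R X' Y')

/-- Reverse depth-respecting bisimulation. -/
def IsRDB (𝒞 : CS E₁ L) (𝒟 : CS E₂ L) (R : Set E₁ → Set E₂ → Prop) : Prop :=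
  IsDB 𝒞 𝒟 R ∧ ∀ X Y, R X Y →
    (∀ a k X', RTransD 𝒞 a k X X' → ∃ Y', RTransD 𝒟 a k Y Y' ∧ R X' Y') ∧
    (∀ a k Y', RTransD 𝒟 a k Y Y' → ∃ X', RTransD 𝒞 a k X X' ∧ R X' Y')

/-- The lifting of a configuration structure w.r.t. a configuration `M`. -/
def lift (𝒞 : CS E L) (M : Set E) : CS E L where
  C := {Z | ∃ X, X ∈ 𝒞.C ∧ M ⊆ X ∧ minE 𝒞 X = minE 𝒞 M ∧ Z = X \ M}
  finite := by
    rintro Z ⟨X, hX, -, -, rfl⟩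
    exact (𝒞.finite X hX).subset Set.diff_subset
  label := 𝒞.label

/-- Events of `X` of depth at most `n`. -/
def levelLe (𝒞 : CS E L) (X : Set E) (n : ℕ) : Set E :=
  {e | e ∈ X ∧ depth 𝒞 X e ≤ n}

/-- Events of `X` of depth exactly `n`. -/
def levelEq (𝒞 : CS E L) (X : Set E) (n : ℕ) : Set E :=
  {e | e ∈ X ∧ depth 𝒞 X e = n}

/-- No equidepth auto-concurrency: distinct concurrent events never share
both label and depth. -/
def NoEqAC (𝒞 : CS E L) : Prop :=
  ∀ X ∈ 𝒞.C, ∀ d ∈ X, ∀ e ∈ X, co 𝒞 X d e → 𝒞.label d = 𝒞.label e →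
    depth 𝒞 X d = depth 𝒞 X e → d = e

/-- `f` (a set of pairs) is a label- and order-preserving isomorphism
between configurations `X` and `Y`. -/
def IsIso (𝒞 : CS E₁ L) (𝒟 : CS E₂ L) (X : Set E₁) (Y : Set E₂)
    (f : Set (E₁ × E₂)) : Prop :=
  (∀ p ∈ f, p.1 ∈ X ∧ p.2 ∈ Y) ∧
  (∀ d ∈ X, ∃! e, (d, e) ∈ f) ∧
  (∀ e ∈ Y, ∃! d, (d, e) ∈ f) ∧
  (∀ p ∈ f, 𝒞.label p.1 = 𝒟.label p.2) ∧
  (∀ p ∈ f, ∀ q ∈ f, (lt 𝒞 X p.1 q.1 ↔ lt 𝒟 Y p.2 q.2))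

/-- Hereditary history-preserving bisimulation. -/
def IsHH (𝒞 : CS E₁ L) (𝒟 : CS E₂ L)
    (R : Set (Set E₁ × Set E₂ × Set (E₁ × E₂))) : Prop :=
  (∅, ∅, ∅) ∈ R ∧
  ∀ X Y f, (X, Y, f) ∈ R →
    X ∈ 𝒞.C ∧ Y ∈ 𝒟.C ∧ IsIso 𝒞 𝒟 X Y f ∧
    (∀ a X', FTrans 𝒞 a X X' → ∃ Y' f', FTrans 𝒟 a Y Y' ∧
      (X', Y', f') ∈ R ∧ {p ∈ f' | p.1 ∈ X} = f) ∧
    (∀ a Y', FTrans 𝒟 a Y Y' → ∃ X' f', FTrans 𝒞 a X X' ∧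
      (X', Y', f') ∈ R ∧ {p ∈ f' | p.1 ∈ X} = f) ∧
    (∀ a X', RTrans 𝒞 a X X' → ∃ Y' f', RTrans 𝒟 a Y Y' ∧
      (X', Y', f') ∈ R ∧ {p ∈ f | p.1 ∈ X'} = f')

end CS

open CS

namespace CSAux

open CS

variable {E : Type u} {L : Type v}

lemma le_refl' (𝒞 : CS E L) (X : Set E) (e : E) : le 𝒞 X e e := fun _ _ _ h => h

lemma le_trans' {𝒞 : CS E L} {X : Set E} {a b c : E}
    (h1 : le 𝒞 X a b) (h2 : le 𝒞 X b c) : le 𝒞 X a c :=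
  fun Y hY hYX hc => h1 Y hY hYX (h2 Y hY hYX hc)

lemma no_two_cycle_aux {𝒞 : CS E L} (h𝒞 : IsStable 𝒞) :
    ∀ n : ℕ, ∀ X, X ∈ 𝒞.C → X.ncard ≤ n → ∀ d e, d ∈ X → e ∈ X → d ≠ e →
      le 𝒞 X d e → le 𝒞 X e d → False := by
  intro n
  induction n with
  | zero =>
    intro X hX hc d e hd _ _ _ _
    have hfin := 𝒞.finite X hX
    have : X = ∅ := by
      rw [← Set.ncard_eq_zero hfin]; omega
    simp [this] at hd
  | succ n ih =>
    intro X hX hc d e hd he hne h1 h2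
    have hfin := 𝒞.finite X hX
    obtain ⟨f, hf, hXf⟩ := h𝒞.2.1 X hX (Set.nonempty_iff_ne_empty.mp ⟨d, hd⟩)
    by_cases hfd : f = d
    · subst hfd
      have : f ∈ X \ {f} := h1 (X \ {f}) hXf Set.diff_subset ⟨he, by simpa using hne.symm⟩
      simp at this
    by_cases hfe : f = e
    · subst hfe
      have : f ∈ X \ {f} := h2 (X \ {f}) hXf Set.diff_subset ⟨hd, by simpa using hne⟩
      simp at this
    · have hcard : (X \ {f}).ncard ≤ n := by
        have h1' : (X \ {f}).ncard = X.ncard - 1 := Set.ncard_diff_singleton_of_mem hf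
        have h2' : 0 < X.ncard := (Set.ncard_pos hfin).mpr ⟨d, hd⟩
        omega
      exact ih (X \ {f}) hXf hcard d e ⟨hd, hfd ∘ Eq.symm⟩ ⟨he, hfe ∘ Eq.symm⟩ hne
        (fun Y hY hs => h1 Y hY (hs.trans Set.diff_subset))
        (fun Y hY hs => h2 Y hY (hs.trans Set.diff_subset))

lemma no_two_cycle {𝒞 : CS E L} (h𝒞 : IsStable 𝒞) {X : Set E} (hX : X ∈ 𝒞.C)
    {d e : E} (hd : d ∈ X) (he : e ∈ X) (hne : d ≠ e)
    (h1 : le 𝒞 X d e) (h2 : le 𝒞 X e d) : False :=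
  no_two_cycle_aux h𝒞 X.ncard X hX le_rfl d e hd he hne h1 h2

lemma lt_trans' {𝒞 : CS E L} (h𝒞 : IsStable 𝒞) {X : Set E} (hX : X ∈ 𝒞.C)
    {a b c : E} (ha : a ∈ X) (hb : b ∈ X) (hc : c ∈ X)
    (h1 : lt 𝒞 X a b) (h2 : lt 𝒞 X b c) : lt 𝒞 X a c := by
  refine ⟨le_trans' h1.1 h2.1, ?_⟩
  rintro rfl
  exact no_two_cycle h𝒞 hX ha hb h1.2 h1.1 h2.1

lemma chain'_pairwise {𝒞 : CS E L} (h𝒞 : IsStable 𝒞) {X : Set E} (hX : X ∈ 𝒞.C) :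
    ∀ l : List E, l.Chain' (lt 𝒞 X) → (∀ x ∈ l, x ∈ X) → l.Pairwise (lt 𝒞 X) := by
  intro l
  induction l with
  | nil => simp
  | cons a l ih =>
    intro hch hmem
    have hpl : l.Pairwise (lt 𝒞 X) := ih hch.tail (fun x hx => hmem x (by simp [hx]))
    refine List.Pairwise.cons ?_ hpl
    intro y hy
    cases l with
    | nil => simp at hy
    | cons b l' =>
      have hab : lt 𝒞 X a b := (List.isChain_cons_cons.mp hch).1
      rcases List.mem_cons.mp hy with rfl | hy'
      · exact hab
      · have hby : lt 𝒞 X b y := (List.pairwise_cons.mp hpl).1 y hy'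
        exact lt_trans' h𝒞 hX (hmem a (by simp)) (hmem b (by simp))
          (hmem y (by simp [hy'])) hab hby

/-- The set whose sup is the depth. -/
def DS (𝒞 : CS E L) (X : Set E) (e : E) : Set ℕ :=
  {n | ∃ l : List E, l.length = n ∧ l.Chain' (lt 𝒞 X) ∧
    (∀ x ∈ l, x ∈ X) ∧ l.getLast? = some e}

lemma depth_eq_sSup (𝒞 : CS E L) (X : Set E) (e : E) :
    depth 𝒞 X e = sSup (DS 𝒞 X e) := rfl

lemma DS_nonempty (𝒞 : CS E L) {X : Set E} {e : E} (he : e ∈ X) :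
    (DS 𝒞 X e).Nonempty :=
  ⟨1, [e], rfl, List.isChain_singleton e, by simpa using he, rfl⟩

lemma DS_bdd {𝒞 : CS E L} (h𝒞 : IsStable 𝒞) {X : Set E} (hX : X ∈ 𝒞.C) (e : E) :
    BddAbove (DS 𝒞 X e) := by
  classical
  refine ⟨X.ncard, ?_⟩
  rintro n ⟨l, rfl, hch, hmem, -⟩
  have hpw := chain'_pairwise h𝒞 hX l hch hmem
  have hnd : l.Nodup := hpw.imp (fun h => h.2)
  calc l.length = l.toFinset.card := (List.toFinset_card_of_nodup hnd).symm
    _ = (l.toFinset : Set E).ncard := (Set.ncard_coe_finset _).symm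
    _ ≤ X.ncard := Set.ncard_le_ncard (fun x hx => hmem x (by simpa using hx))
        (𝒞.finite X hX)

lemma depth_mem_DS {𝒞 : CS E L} (h𝒞 : IsStable 𝒞) {X : Set E} (hX : X ∈ 𝒞.C)
    {e : E} (he : e ∈ X) : depth 𝒞 X e ∈ DS 𝒞 X e :=
  Nat.sSup_mem (DS_nonempty 𝒞 he) (DS_bdd h𝒞 hX e)

lemma le_depth_of_mem {𝒞 : CS E L} (h𝒞 : IsStable 𝒞) {X : Set E} (hX : X ∈ 𝒞.C)
    {e : E} {n : ℕ} (hn : n ∈ DS 𝒞 X e) : n ≤ depth 𝒞 X e :=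
  le_csSup (DS_bdd h𝒞 hX e) hn

lemma depth_lt {𝒞 : CS E L} (h𝒞 : IsStable 𝒞) {X : Set E} (hX : X ∈ 𝒞.C)
    {d e : E} (hd : d ∈ X) (he : e ∈ X) (hlt : lt 𝒞 X d e) :
    depth 𝒞 X d + 1 ≤ depth 𝒞 X e := by
  obtain ⟨l, hlen, hch, hmem, hlast⟩ := depth_mem_DS h𝒞 hX hd
  refine le_depth_of_mem h𝒞 hX ⟨l ++ [e], by simp [hlen], ?_, ?_, ?_⟩
  · refine List.isChain_append.mpr ?_
    refine ⟨hch, List.isChain_singleton e, ?_⟩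
    intro x hx y hy
    simp only [List.head?_cons, Option.mem_def, Option.some.injEq] at hy
    rw [hlast] at hx
    simp only [Option.mem_def, Option.some.injEq] at hx
    subst hx; subst hy; exact hlt
  · intro x hx
    rcases List.mem_append.mp hx with hx | hx
    · exact hmem x hx
    · rw [List.mem_singleton] at hx; subst hx; exact he
  · simp

lemma le_iff_of_subset {𝒞 : CS E L} (h𝒞 : IsStable 𝒞) {X₁ X₂ : Set E}
    (hX₁ : X₁ ∈ 𝒞.C) (hX₂ : X₂ ∈ 𝒞.C) (h12 : X₁ ⊆ X₂) {d e : E} (he : e ∈ X₁) :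
    le 𝒞 X₁ d e ↔ le 𝒞 X₂ d e := by
  constructor
  · intro h Y hY hYX₂ heY
    have hint : Y ∩ X₁ ∈ 𝒞.C :=
      h𝒞.2.2.2 Y hY X₁ hX₁ X₂ hX₂ (Set.union_subset hYX₂ h12)
    exact (h (Y ∩ X₁) hint Set.inter_subset_right ⟨heY, he⟩).1
  · exact fun h Y hY hs => h Y hY (hs.trans h12)

lemma lt_iff_of_subset {𝒞 : CS E L} (h𝒞 : IsStable 𝒞) {X₁ X₂ : Set E}
    (hX₁ : X₁ ∈ 𝒞.C) (hX₂ : X₂ ∈ 𝒞.C) (h12 : X₁ ⊆ X₂) {d e : E} (he : e ∈ X₁) :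
    lt 𝒞 X₁ d e ↔ lt 𝒞 X₂ d e :=
  and_congr_left' (le_iff_of_subset h𝒞 hX₁ hX₂ h12 he)

lemma mem_of_le {𝒞 : CS E L} {X₁ X₂ : Set E} (hX₁ : X₁ ∈ 𝒞.C) (h12 : X₁ ⊆ X₂)
    {d e : E} (he : e ∈ X₁) (h : le 𝒞 X₂ d e) : d ∈ X₁ :=
  h X₁ hX₁ h12 he

lemma chain_le_last {𝒞 : CS E L} {X : Set E} :
    ∀ l : List E, l.Chain' (lt 𝒞 X) → ∀ e, l.getLast? = some e →
      ∀ x ∈ l, le 𝒞 X x e := by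
  intro l
  induction l with
  | nil => intro _ e h; simp at h
  | cons a l ih =>
    intro hch e hlast x hx
    cases l with
    | nil =>
      simp at hlast hx
      subst hlast; subst hx; exact le_refl' _ _ _
    | cons b l' =>
      rw [List.getLast?_cons_cons] at hlast
      rcases List.mem_cons.mp hx with rfl | hx'
      · have hab : lt 𝒞 X x b := (List.isChain_cons_cons.mp hch).1
        exact le_trans' hab.1 (ih hch.tail e hlast b (by simp))
      · exact ih hch.tail e hlast x hx'

lemma chain'_mono_mem {α : Type*} {R S : α → α → Prop} :
    ∀ l : List α, (∀ x ∈ l, ∀ y ∈ l, R x y → S x y) → l.Chain' R → l.Chain' S := by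
  intro l
  induction l with
  | nil => intro _ _; exact List.isChain_nil
  | cons a l ih =>
    intro h hch
    match l with
    | [] => exact List.isChain_singleton a
    | b :: l' =>
      replace hch := List.isChain_cons_cons.mp hch
      refine List.isChain_cons_cons.mpr ?_
      exact ⟨h a (by simp) b (by simp) hch.1,
        ih (fun x hx y hy => h x (by simp [hx]) y (by simp [hy])) hch.2⟩

lemma depth_eq_of_subset {𝒞 : CS E L} (h𝒞 : IsStable 𝒞) {X₁ X₂ : Set E}
    (hX₁ : X₁ ∈ 𝒞.C) (hX₂ : X₂ ∈ 𝒞.C) (h12 : X₁ ⊆ X₂) {e : E} (he : e ∈ X₁) :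
    depth 𝒞 X₁ e = depth 𝒞 X₂ e := by
  rw [depth_eq_sSup, depth_eq_sSup]
  congr 1
  ext n
  constructor
  · rintro ⟨l, hlen, hch, hmem, hlast⟩
    refine ⟨l, hlen, ?_, fun x hx => h12 (hmem x hx), hlast⟩
    exact chain'_mono_mem l
      (fun x hx y hy h => (lt_iff_of_subset h𝒞 hX₁ hX₂ h12 (hmem y hy)).mp h) hch
  · rintro ⟨l, hlen, hch, hmem, hlast⟩
    have hmem₁ : ∀ x ∈ l, x ∈ X₁ := fun x hx =>
      mem_of_le hX₁ h12 he (chain_le_last l hch e hlast x hx)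
    refine ⟨l, hlen, ?_, hmem₁, hlast⟩
    exact chain'_mono_mem l
      (fun x hx y hy h => (lt_iff_of_subset h𝒞 hX₁ hX₂ h12 (hmem₁ y hy)).mpr h) hch

lemma exists_min_config {𝒞 : CS E L} (h𝒞 : IsStable 𝒞) {X' : Set E}
    (hX' : X' ∈ 𝒞.C) {e : E} (he : e ∈ X') :
    ∃ Y, Y ∈ 𝒞.C ∧ Y ⊆ X' ∧ e ∈ Y ∧ ∀ d ∈ Y, le 𝒞 X' d e := by
  set N : Set ℕ := {n | ∃ Y, (Y ∈ 𝒞.C ∧ Y ⊆ X' ∧ e ∈ Y) ∧ Y.ncard = n} with hN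
  have hNne : N.Nonempty := ⟨X'.ncard, X', ⟨hX', subset_rfl, he⟩, rfl⟩
  obtain ⟨Ymin, ⟨hYC, hYs, heY⟩, hYcard⟩ := Nat.sInf_mem hNne
  refine ⟨Ymin, hYC, hYs, heY, ?_⟩
  intro d hd Y hY hYX' heY'
  have hint : Ymin ∩ Y ∈ 𝒞.C :=
    h𝒞.2.2.2 Ymin hYC Y hY X' hX' (Set.union_subset hYs hYX')
  have hmemN : (Ymin ∩ Y).ncard ∈ N :=
    ⟨Ymin ∩ Y, ⟨hint, Set.inter_subset_left.trans hYs, ⟨heY, heY'⟩⟩, rfl⟩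
  have hle : Ymin.ncard ≤ (Ymin ∩ Y).ncard := hYcard ▸ Nat.sInf_le hmemN
  have heq : Ymin ∩ Y = Ymin :=
    Set.eq_of_subset_of_ncard_le Set.inter_subset_left hle
      (𝒞.finite Ymin hYC)
  rw [← heq] at hd
  exact hd.2

lemma union_singleton_mem {𝒞 : CS E L} (h𝒞 : IsStable 𝒞) {X X' : Set E}
    (hX : X ∈ 𝒞.C) (hX' : X' ∈ 𝒞.C) (hsub : X ⊆ X') {e : E} (he : e ∈ X')
    (hcauses : ∀ d, lt 𝒞 X' d e → d ∈ X) : X ∪ {e} ∈ 𝒞.C := by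
  obtain ⟨Y, hYC, hYs, heY, hYle⟩ := exists_min_config h𝒞 hX' he
  have hkey : X ∪ Y = X ∪ {e} := by
    apply Set.Subset.antisymm
    · rintro x (hx | hx)
      · exact Or.inl hx
      · by_cases hxe : x = e
        · exact Or.inr (by simp [hxe])
        · exact Or.inl (hcauses x ⟨hYle x hx, hxe⟩)
    · rintro x (hx | rfl)
      · exact Or.inl hx
      · exact Or.inr heY
  have : X ∪ Y ∈ 𝒞.C :=
    h𝒞.2.2.1 X hX Y hYC X' hX' (Set.union_subset hsub hYs)
  rwa [hkey] at this

end CSAux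


namespace CSAux

open CS

lemma main_step {E₁ E₂ : Type u} {L : Type v} {𝒞 : CS E₁ L} {𝒟 : CS E₂ L}
    (h𝒞 : IsStable 𝒞) (h𝒟 : IsStable 𝒟) (R : Set E₁ → Set E₂ → Prop)
    (hDom : ∀ X Y, R X Y → X ∈ 𝒞.C ∧ Y ∈ 𝒟.C)
    (hFwd : ∀ X Y, R X Y → ∀ a k X', FTransD 𝒞 a k X X' →
      ∃ Y', FTransD 𝒟 a k Y Y' ∧ R X' Y') :
    ∀ n : ℕ, ∀ (F : Finset E₁) (X X' : Set E₁) (Y : Set E₂), F.card = n →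
      R X Y → X ∈ 𝒞.C → X' ∈ 𝒞.C → X ⊆ X' → ↑F = X' \ X →
      (∀ d ∈ F, ∀ e ∈ F, co 𝒞 X' d e) →
      ∃ (Y' : Set E₂) (G : Finset E₂), Y' ∈ 𝒟.C ∧ Y ⊆ Y' ∧ ↑G = Y' \ Y ∧
        (∀ d ∈ G, ∀ e ∈ G, co 𝒟 Y' d e) ∧
        G.val.map 𝒟.label = F.val.map 𝒞.label ∧
        G.val.map (depth 𝒟 Y') = F.val.map (depth 𝒞 X') ∧ R X' Y' := by
  classical
  intro n
  induction n with
  | zero =>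
    intro F X X' Y hcard hR hXC hX'C hsub hF _
    have hFe : F = ∅ := Finset.card_eq_zero.mp hcard
    subst hFe
    have hXX' : X' = X := by
      apply Set.Subset.antisymm _ hsub
      intro x hx
      by_contra hxn
      have hx2 : x ∈ X' \ X := ⟨hx, hxn⟩
      rw [← hF] at hx2
      simp at hx2
    refine ⟨Y, ∅, (hDom X Y hR).2, subset_rfl, by simp, by simp, by simp, by simp, ?_⟩
    rw [hXX']
    exact hR
  | succ n ih =>
    intro F X X' Y hcard hR hXC hX'C hsub hF hco
    have hFne : F.Nonempty := Finset.card_pos.mp (by omega)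
    obtain ⟨e, heF, hmax⟩ := F.exists_max_image (depth 𝒞 X') hFne
    have heX' : e ∈ X' := (hF ▸ (Finset.mem_coe.mpr heF) : e ∈ X' \ X).1
    have heX : e ∉ X := (hF ▸ (Finset.mem_coe.mpr heF) : e ∈ X' \ X).2
    set k := depth 𝒞 X' e with hk
    -- X₁ = X ∪ {e} is a configuration
    have hX₁C : X ∪ {e} ∈ 𝒞.C := by
      apply union_singleton_mem h𝒞 hXC hX'C hsub heX'
      intro d hlt
      have hdX' : d ∈ X' := hlt.1 X' hX'C subset_rfl heX'
      by_contra hdX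
      have hdF : d ∈ F := Finset.mem_coe.mp (hF ▸ (⟨hdX', hdX⟩ : d ∈ X' \ X))
      exact (hco d hdF e heF).1 hlt
    set X₁ : Set E₁ := X ∪ {e} with hX₁
    have hX₁sub : X₁ ⊆ X' := Set.union_subset hsub (by simpa using heX')
    have hX₁diff : X₁ \ X = {e} := by
      ext x; simp only [hX₁, Set.mem_diff, Set.mem_union, Set.mem_singleton_iff]
      constructor
      · rintro ⟨hx | rfl, hxn⟩
        · exact absurd hx hxn
        · rfl
      · rintro rfl; exact ⟨Or.inr rfl, heX⟩
    have heX₁ : e ∈ X₁ := Or.inr rfl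
    -- the single-event transition X → X₁
    have hft : FTransD 𝒞 (𝒞.label e) k X X₁ :=
      ⟨hXC, hX₁C, Set.subset_union_left, e, hX₁diff, rfl,
        (depth_eq_of_subset h𝒞 hX₁C hX'C hX₁sub heX₁).trans rfl⟩
    obtain ⟨Y₁, hftY, hRXY₁⟩ := hFwd X Y hR _ _ _ hft
    obtain ⟨hYC, hY₁C, hYsub₁, f, hfdiff, hflab, hfdep⟩ := hftY
    have hfY₁ : f ∈ Y₁ := (hfdiff ▸ rfl : f ∈ Y₁ \ Y).1
    have hfY : f ∉ Y := (hfdiff ▸ rfl : f ∈ Y₁ \ Y).2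
    -- the remaining step X₁ → X'
    set F₁ := F.erase e with hF₁
    have hF₁coe : (↑F₁ : Set E₁) = X' \ X₁ := by
      rw [hF₁, Finset.coe_erase, hF]
      ext x
      simp only [Set.mem_diff, Set.mem_singleton_iff, hX₁, Set.mem_union]
      tauto
    obtain ⟨Y', G₁, hY'C, hY₁sub', hG₁, hG₁co, hG₁lab, hG₁dep, hRX'Y'⟩ :=
      ih F₁ X₁ X' Y₁ (by rw [hF₁, Finset.card_erase_of_mem heF, hcard]; omega) hRXY₁
        hX₁C hX'C hX₁sub hF₁coe
        (fun d hd e' he' => hco d (Finset.mem_of_mem_erase hd) e'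
          (Finset.mem_of_mem_erase he'))
    have hY₁sub : Y₁ ⊆ Y' := hY₁sub'
    have hfY' : f ∈ Y' := hY₁sub hfY₁
    have hfG₁ : f ∉ G₁ := fun h => ((hG₁ ▸ Finset.mem_coe.mpr h : f ∈ Y' \ Y₁)).2 hfY₁
    -- depth of f in Y' is k
    have hfdepY' : depth 𝒟 Y' f = k :=
      (depth_eq_of_subset h𝒟 hY₁C hY'C hY₁sub hfY₁).symm.trans hfdep
    -- depths of G₁ elements are ≤ k
    have hG₁dep_le : ∀ g ∈ G₁, depth 𝒟 Y' g ≤ k := by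
      intro g hg
      have : depth 𝒟 Y' g ∈ G₁.val.map (depth 𝒟 Y') :=
        Multiset.mem_map_of_mem _ hg
      rw [hG₁dep] at this
      obtain ⟨x, hx, hxeq⟩ := Multiset.mem_map.mp this
      have hxF : x ∈ F := Finset.mem_of_mem_erase hx
      rw [← hxeq]
      exact hmax x hxF
    -- concurrency of f with elements of G₁
    have hcofg : ∀ g ∈ G₁, co 𝒟 Y' f g := by
      intro g hg
      have hgY' : g ∈ Y' \ Y₁ := hG₁ ▸ Finset.mem_coe.mpr hg
      constructor
      · intro hlt
        have h1 : depth 𝒟 Y' f + 1 ≤ depth 𝒟 Y' g :=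
          depth_lt h𝒟 hY'C hfY' hgY'.1 hlt
        have h2 := hG₁dep_le g hg
        omega
      · intro hlt
        exact hgY'.2 (mem_of_le hY₁C hY₁sub hfY₁ hlt.1)
    set G := insert f G₁ with hG
    have hGval : G.val = f ::ₘ G₁.val := Finset.insert_val_of_notMem hfG₁
    have hGcoe : (↑G : Set E₂) = Y' \ Y := by
      rw [hG, Finset.coe_insert, hG₁]
      ext x
      simp only [Set.mem_insert_iff, Set.mem_diff]
      constructor
      · rintro (rfl | ⟨hx, hxn⟩)
        · exact ⟨hfY', hfY⟩
        · exact ⟨hx, fun h => hxn (hYsub₁ h)⟩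
      · rintro ⟨hx, hxn⟩
        by_cases hxY₁ : x ∈ Y₁
        · left
          have : x ∈ Y₁ \ Y := ⟨hxY₁, hxn⟩
          rw [hfdiff] at this
          exact this
        · exact Or.inr ⟨hx, hxY₁⟩
    have hFval : F.val = e ::ₘ F₁.val := by
      rw [hF₁, Finset.erase_val]
      exact (Multiset.cons_erase (Finset.mem_val.mpr heF)).symm
    refine ⟨Y', G, hY'C, hYsub₁.trans hY₁sub, hGcoe, ?_, ?_, ?_, hRX'Y'⟩
    · intro d hd e' he'
      rw [hG, Finset.mem_insert] at hd he'
      rcases hd with rfl | hd <;> rcases he' with rfl | he'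
      · exact ⟨fun h => h.2 rfl, fun h => h.2 rfl⟩
      · exact hcofg e' he'
      · exact ⟨(hcofg d hd).2, (hcofg d hd).1⟩
      · exact hG₁co d hd e' he'
    · rw [hGval, hFval, Multiset.map_cons, Multiset.map_cons, hG₁lab, hflab]
    · rw [hGval, hFval, Multiset.map_cons, Multiset.map_cons, hG₁dep,
        hfdepY', hk]

end CSAux


/-- every depth-respecting bisimulation is a step bisimulation;
hence DB equivalence is included in SB equivalence. -/
theorem stmt10 {E₁ E₂ : Type u} {L : Type v} (𝒞 : CS E₁ L) (𝒟 : CS E₂ L)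
    (h𝒞 : IsStable 𝒞) (h𝒟 : IsStable 𝒟) :
    (∀ R : Set E₁ → Set E₂ → Prop, IsDB 𝒞 𝒟 R → IsSB 𝒞 𝒟 R) ∧
    ((∃ R : Set E₁ → Set E₂ → Prop, IsDB 𝒞 𝒟 R) →
      (∃ R : Set E₁ → Set E₂ → Prop, IsSB 𝒞 𝒟 R)) := by
  have hmain : ∀ R : Set E₁ → Set E₂ → Prop, IsDB 𝒞 𝒟 R → IsSB 𝒞 𝒟 R := by
    intro R hDB
    obtain ⟨⟨hR0, hDom⟩, hcl⟩ := hDB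
    refine ⟨⟨hR0, hDom⟩, ?_⟩
    intro X Y hXY
    constructor
    · intro A X' hstep
      obtain ⟨hXC, hX'C, hsub, F, hF, hco, hA⟩ := hstep
      obtain ⟨Y', G, hY'C, hYsub, hGcoe, hGco, hGlab, -, hR'⟩ :=
        CSAux.main_step h𝒞 h𝒟 R hDom (fun X Y h => (hcl X Y h).1)
          F.card F X X' Y rfl hXY hXC hX'C hsub hF hco
      exact ⟨Y', ⟨(hDom X Y hXY).2, hY'C, hYsub, G, hGcoe, hGco,
        by rw [hGlab, hA]⟩, hR'⟩
    · intro A Y' hstep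
      obtain ⟨hYC, hY'C, hsub, G, hG, hco, hA⟩ := hstep
      obtain ⟨X', F, hX'C, hXsub, hFcoe, hFco, hFlab, -, hR'⟩ :=
        CSAux.main_step h𝒟 h𝒞 (fun Y X => R X Y)
          (fun Y X h => ⟨(hDom X Y h).2, (hDom X Y h).1⟩)
          (fun Y X h a k Y'' ht => (hcl X Y h).2 a k Y'' ht)
          G.card G Y Y' X rfl hXY hYC hY'C hsub hG hco
      exact ⟨X', ⟨(hDom X Y hXY).1, hX'C, hXsub, F, hFcoe, hFco,
        by rw [hFlab, hA]⟩, hR'⟩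
  exact ⟨hmain, fun ⟨R, h⟩ => ⟨R, hmain R h⟩⟩
end

section
/- Every reverse depth-respecting bisimulation between stable configuration structures is a reverse step bisimulation; hence reverse depth-respecting bisimulation equivalence is included in reverse step bisimulation equivalence. -/
universe u v

namespace CS
variable {E : Type u} {L : Type v}

section Basic
variable (𝒞 : CS E L)

lemma le_mono' {X Z : Set E} (hZX : Z ⊆ X) {d e : E}
    (h : CS.le 𝒞 X d e) : CS.le 𝒞 Z d e :=
  fun Y hY hYZ he => h Y hY (hYZ.trans hZX) he

lemma lt_mono' {X Z : Set E} (hZX : Z ⊆ X) {d e : E}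
    (h : CS.lt 𝒞 X d e) : CS.lt 𝒞 Z d e := ⟨le_mono' 𝒞 hZX h.1, h.2⟩

lemma le_up (h𝒞 : IsStable 𝒞) {X Z : Set E}
    (hX : X ∈ 𝒞.C) (hZ : Z ∈ 𝒞.C) (hZX : Z ⊆ X) {d e : E} (he : e ∈ Z)
    (h : CS.le 𝒞 Z d e) : CS.le 𝒞 X d e := by
  intro Y hY hYX heY
  have hInt : Y ∩ Z ∈ 𝒞.C :=
    h𝒞.2.2.2 Y hY Z hZ X hX (Set.union_subset hYX hZX)
  exact (h (Y ∩ Z) hInt Set.inter_subset_right ⟨heY, he⟩).1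

lemma lt_up (h𝒞 : IsStable 𝒞) {X Z : Set E}
    (hX : X ∈ 𝒞.C) (hZ : Z ∈ 𝒞.C) (hZX : Z ⊆ X) {d e : E} (he : e ∈ Z)
    (h : CS.lt 𝒞 Z d e) : CS.lt 𝒞 X d e :=
  ⟨le_up 𝒞 h𝒞 hX hZ hZX he h.1, h.2⟩

lemma le_antisymm' (h𝒞 : IsStable 𝒞) {X : Set E} (hX : X ∈ 𝒞.C)
    {d e : E} (he : e ∈ X) (hde : CS.le 𝒞 X d e) (hed : CS.le 𝒞 X e d) :
    d = e := by
  have H : ∀ n (Y : Set E), Y.ncard ≤ n → Y ∈ 𝒞.C → Y ⊆ X → e ∈ Y → d = e := by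
    intro n
    induction n with
    | zero =>
      intro Y hc hY hYX heY
      have hfin : Y.Finite := 𝒞.finite Y hY
      have : Y = ∅ := by
        rw [← Set.ncard_eq_zero hfin]; omega
      simp [this] at heY
    | succ n ih =>
      intro Y hc hY hYX heY
      have hfin : Y.Finite := 𝒞.finite Y hY
      have hne : Y ≠ ∅ := fun h => by simp [h] at heY
      obtain ⟨f, hfY, hYf⟩ := h𝒞.2.1 Y hY hne
      by_cases hfe : f = e
      · subst hfe
        have hdY : d ∈ Y := hde Y hY hYX heY
        by_contra hne'
        have := hed (Y \ {f}) hYf (Set.diff_subset.trans hYX) ⟨hdY, hne'⟩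
        exact this.2 rfl
      · have hcard : (Y \ {f}).ncard < Y.ncard :=
          Set.ncard_diff_singleton_lt_of_mem hfY hfin
        exact ih (Y \ {f}) (by omega) hYf (Set.diff_subset.trans hYX)
          ⟨heY, fun h => hfe ((Set.mem_singleton_iff.mp h).symm)⟩
  exact H X.ncard X le_rfl hX subset_rfl he

lemma lt_trans' (h𝒞 : IsStable 𝒞) {X : Set E} (hX : X ∈ 𝒞.C)
    {a b c : E} (hb : b ∈ X) (h1 : CS.lt 𝒞 X a b) (h2 : CS.lt 𝒞 X b c) :
    CS.lt 𝒞 X a c := by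
  refine ⟨fun Y hY hYX hc => h1.1 Y hY hYX (h2.1 Y hY hYX hc), ?_⟩
  rintro rfl
  exact h1.2 (le_antisymm' 𝒞 h𝒞 hX hb h1.1 h2.1)

lemma co_refl' {X : Set E} (d : E) : CS.co 𝒞 X d d :=
  ⟨fun h => h.2 rfl, fun h => h.2 rfl⟩

end Basic
end CS

namespace CS
variable {E : Type u} {L : Type v}

section Depth
variable (𝒞 : CS E L)

/-- The set of chain lengths defining `depth`. -/
def dSet (X : Set E) (e : E) : Set ℕ :=
  {n | ∃ l : List E, l.length = n ∧ l.Chain' (CS.lt 𝒞 X) ∧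
    (∀ x ∈ l, x ∈ X) ∧ l.getLast? = some e}

lemma depth_def (X : Set E) (e : E) :
    CS.depth 𝒞 X e = sSup (dSet 𝒞 X e) := rfl

lemma chain_head_lt (h𝒞 : IsStable 𝒞) {X : Set E} (hX : X ∈ 𝒞.C) :
    ∀ (t : List E) (a : E), List.Chain (CS.lt 𝒞 X) a t →
      (∀ x ∈ t, x ∈ X) → ∀ x ∈ t, CS.lt 𝒞 X a x := by
  intro t
  induction t with
  | nil => intro a _ _ x hx; simp at hx
  | cons b t' ih =>
    intro a hch hmem x hx
    replace hch := List.isChain_cons_cons.mp hch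
    rcases List.mem_cons.mp hx with rfl | hx
    · exact hch.1
    · exact lt_trans' 𝒞 h𝒞 hX (hmem b (by simp)) hch.1
        (ih b hch.2 (fun y hy => hmem y (by simp [hy])) x hx)

lemma chain_nodup (h𝒞 : IsStable 𝒞) {X : Set E} (hX : X ∈ 𝒞.C) :
    ∀ (l : List E), l.Chain' (CS.lt 𝒞 X) → (∀ x ∈ l, x ∈ X) → l.Nodup := by
  intro l
  induction l with
  | nil => simp
  | cons a t ih =>
    intro hch hmem
    have hch' : List.Chain (CS.lt 𝒞 X) a t := hch
    refine List.nodup_cons.mpr ⟨?_, ih (List.IsChain.tail hch) (fun y hy => hmem y (by simp [hy]))⟩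
    intro ha
    exact (chain_head_lt 𝒞 h𝒞 hX t a hch' (fun y hy => hmem y (by simp [hy])) a ha).2 rfl

lemma dSet_bddAbove (h𝒞 : IsStable 𝒞) {X : Set E} (hX : X ∈ 𝒞.C) (e : E) :
    BddAbove (dSet 𝒞 X e) := by
  refine ⟨X.ncard, ?_⟩
  rintro n ⟨l, rfl, hch, hmem, -⟩
  have hnd : l.Nodup := chain_nodup 𝒞 h𝒞 hX l hch hmem
  have hfin : X.Finite := 𝒞.finite X hX
  classical
  have h1 : l.toFinset.card = l.length := List.toFinset_card_of_nodup hnd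
  have h2 : l.toFinset ⊆ hfin.toFinset := by
    intro x hx
    rw [Set.Finite.mem_toFinset]
    exact hmem x (List.mem_toFinset.mp hx)
  have := Finset.card_le_card h2
  rw [Set.ncard_eq_toFinset_card X hfin]
  omega

lemma dSet_nonempty {X : Set E} {e : E} (he : e ∈ X) :
    (dSet 𝒞 X e).Nonempty :=
  ⟨1, [e], rfl, List.isChain_singleton e, by simpa using he, rfl⟩

lemma depth_mem_dSet (h𝒞 : IsStable 𝒞) {X : Set E} (hX : X ∈ 𝒞.C) {e : E}
    (he : e ∈ X) : CS.depth 𝒞 X e ∈ dSet 𝒞 X e :=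
  Nat.sSup_mem (dSet_nonempty 𝒞 he) (dSet_bddAbove 𝒞 h𝒞 hX e)

lemma le_depth (h𝒞 : IsStable 𝒞) {X : Set E} (hX : X ∈ 𝒞.C) {e : E} {n : ℕ}
    (hn : n ∈ dSet 𝒞 X e) : n ≤ CS.depth 𝒞 X e :=
  le_csSup (dSet_bddAbove 𝒞 h𝒞 hX e) hn

lemma chain'_imp_mem {R S : E → E → Prop} {P : E → Prop} :
    ∀ (l : List E), l.Chain' R → (∀ x ∈ l, P x) →
      (∀ a b, P a → P b → R a b → S a b) → l.Chain' S := by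
  intro l
  induction l with
  | nil => intro _ _ _; exact List.IsChain.nil
  | cons a t ih =>
    intro hch hmem himp
    cases t with
    | nil => exact List.isChain_singleton a
    | cons b t' =>
      simp only [List.Chain', List.isChain_cons_cons] at hch ⊢
      exact ⟨himp a b (hmem a (by simp)) (hmem b (by simp)) hch.1,
        ih hch.2 (fun y hy => hmem y (by simp [hy])) himp⟩

lemma depth_mono (h𝒞 : IsStable 𝒞) {Z X : Set E}
    (hZ : Z ∈ 𝒞.C) (hX : X ∈ 𝒞.C) (hZX : Z ⊆ X) {e : E} (he : e ∈ Z) :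
    CS.depth 𝒞 Z e ≤ CS.depth 𝒞 X e := by
  rw [depth_def, depth_def]
  refine csSup_le_csSup (dSet_bddAbove 𝒞 h𝒞 hX e) (dSet_nonempty 𝒞 he) ?_
  rintro n ⟨l, rfl, hch, hmem, hlast⟩
  refine ⟨l, rfl, ?_, fun x hx => hZX (hmem x hx), hlast⟩
  exact chain'_imp_mem l hch hmem
    (fun a b ha hb hab => lt_up 𝒞 h𝒞 hX hZ hZX hb hab)

lemma chain_last (h𝒞 : IsStable 𝒞) {X : Set E} (hX : X ∈ 𝒞.C) {e : E} :
    ∀ (l : List E), l.Chain' (CS.lt 𝒞 X) → (∀ x ∈ l, x ∈ X) →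
      l.getLast? = some e → ∀ x ∈ l, x = e ∨ CS.lt 𝒞 X x e := by
  intro l
  induction l with
  | nil => intro _ _ h; simp at h
  | cons a t ih =>
    intro hch hmem hlast x hx
    cases t with
    | nil =>
      have ha : a = e := by simpa using hlast
      have hxa : x = a := by simpa using hx
      left; rw [hxa, ha]
    | cons b t' =>
      have hch2 : List.Chain (CS.lt 𝒞 X) a (b :: t') := hch
      replace hch2 := List.isChain_cons_cons.mp hch2
      have hlast' : (b :: t').getLast? = some e := by
        simpa [List.getLast?_cons_cons] using hlast
      rcases List.mem_cons.mp hx with rfl | hx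
      · rcases ih (List.isChain_cons_cons.mp hch).2 (fun y hy => hmem y (by simp [hy]))
            hlast' b (by simp) with hbe | hbe
        · right; exact hbe ▸ hch2.1
        · right; exact lt_trans' 𝒞 h𝒞 hX (hmem b (by simp)) hch2.1 hbe
      · exact ih (List.isChain_cons_cons.mp hch).2 (fun y hy => hmem y (by simp [hy]))
          hlast' x hx

lemma depth_lt_of_lt (h𝒞 : IsStable 𝒞) {X : Set E} (hX : X ∈ 𝒞.C) {d e : E}
    (hd : d ∈ X) (he : e ∈ X) (hlt : CS.lt 𝒞 X d e) :
    CS.depth 𝒞 X d < CS.depth 𝒞 X e := by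
  obtain ⟨l, hlen, hch, hmem, hlast⟩ := depth_mem_dSet 𝒞 h𝒞 hX hd
  have hne : l ≠ [] := by rintro rfl; simp at hlast
  have hmem' : ∀ x ∈ l ++ [e], x ∈ X := by
    intro x hx
    rcases List.mem_append.mp hx with h | h
    · exact hmem x h
    · simp at h; exact h ▸ he
  have hch' : (l ++ [e]).Chain' (CS.lt 𝒞 X) := by
    refine List.isChain_append.mpr ?_
    refine ⟨hch, List.isChain_singleton e, ?_⟩
    intro x hx y hy
    simp at hy
    rw [hlast] at hx
    simp at hx
    subst hx; subst hy; exact hlt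
  have hmemd : (l.length + 1) ∈ dSet 𝒞 X e := by
    refine ⟨l ++ [e], by simp, hch', hmem', ?_⟩
    simp [List.getLast?_concat]
  have := le_depth 𝒞 h𝒞 hX hmemd
  omega

/-- If all strict causes of `e` in `X` lie in the sub-configuration `Z`,
the depth of `e` in `X` is at most its depth in `Z`. -/
lemma depth_le_of_causes (h𝒞 : IsStable 𝒞) {Z X : Set E}
    (hZ : Z ∈ 𝒞.C) (hX : X ∈ 𝒞.C) (hZX : Z ⊆ X) {e : E} (he : e ∈ Z)
    (hcauses : ∀ d ∈ X, CS.lt 𝒞 X d e → d ∈ Z) :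
    CS.depth 𝒞 X e ≤ CS.depth 𝒞 Z e := by
  rw [depth_def, depth_def]
  refine csSup_le_csSup (dSet_bddAbove 𝒞 h𝒞 hZ e) (dSet_nonempty 𝒞 (hZX he)) ?_
  rintro n ⟨l, rfl, hch, hmem, hlast⟩
  have hmemZ : ∀ x ∈ l, x ∈ Z := by
    intro x hx
    rcases chain_last 𝒞 h𝒞 hX l hch hmem hlast x hx with h | h
    · exact h ▸ he
    · exact hcauses x (hmem x hx) h
  exact ⟨l, rfl, List.IsChain.imp (fun a b => lt_mono' 𝒞 hZX) hch, hmemZ, hlast⟩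

end Depth
end CS

namespace CS
variable {E : Type u} {L : Type v}

section Max
variable (𝒞 : CS E L)

/-- Freshly added events (concurrent with all other new events) are maximal. -/
lemma max_of_conc {X X' : Set E} (hX : X ∈ 𝒞.C) (hsub : X ⊆ X') {f : E}
    (hf : f ∈ X' \ X) (hconc : ∀ d ∈ X' \ X, CS.co 𝒞 X' f d) :
    ∀ h ∈ X', ¬ CS.lt 𝒞 X' f h := by
  intro h hh hlt
  by_cases hhX : h ∈ X
  · exact hf.2 (hlt.1 X hX hsub hhX)
  · exact (hconc h ⟨hh, hhX⟩).1 hlt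

/-- A maximal event can be removed from a configuration. -/
lemma remove_max (h𝒞 : IsStable 𝒞) {X : Set E} {e : E} (hX : X ∈ 𝒞.C)
    (he : e ∈ X) (hmax : ∀ d ∈ X, ¬ CS.lt 𝒞 X e d) : X \ {e} ∈ 𝒞.C := by
  classical
  have key : ∀ S : Finset E, ↑S ⊆ X \ {e} →
      ∃ Y, Y ∈ 𝒞.C ∧ ↑S ⊆ Y ∧ Y ⊆ X \ {e} := by
    intro S
    induction S using Finset.induction with
    | empty => exact fun _ => ⟨∅, h𝒞.1, by simp, by simp⟩
    | @insert a S ha ih =>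
      intro hsub
      obtain ⟨Y, hYC, hSY, hYX⟩ := ih (by
        refine subset_trans ?_ hsub
        exact_mod_cast Finset.coe_subset.mpr (Finset.subset_insert a S))
      have haX : a ∈ X \ {e} := hsub (by simp)
      have hnle : ¬ CS.le 𝒞 X e a := by
        intro hle
        exact hmax a haX.1 ⟨hle, fun h => haX.2 (by simp [← h])⟩
      have hex : ∃ Y', Y' ∈ 𝒞.C ∧ Y' ⊆ X ∧ a ∈ Y' ∧ e ∉ Y' := by
        by_contra hcon
        push_neg at hcon
        exact hnle fun Y' hY' hY'X haY' => hcon Y' hY' hY'X haY'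
      obtain ⟨Y', hY'C, hY'X, haY', heY'⟩ := hex
      refine ⟨Y ∪ Y', h𝒞.2.2.1 Y hYC Y' hY'C X hX
        (Set.union_subset (hYX.trans Set.diff_subset) hY'X), ?_, ?_⟩
      · rw [Finset.coe_insert]
        exact Set.insert_subset (Or.inr haY') (hSY.trans Set.subset_union_left)
      · exact Set.union_subset hYX (fun x hx => ⟨hY'X hx, fun hxe => heY' (by
          rw [Set.mem_singleton_iff] at hxe; rwa [hxe] at hx)⟩)
  have hfin : (X \ {e}).Finite := (𝒞.finite X hX).subset Set.diff_subset
  obtain ⟨Y, hYC, h1, h2⟩ := key hfin.toFinset (by rw [Set.Finite.coe_toFinset])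
  rw [Set.Finite.coe_toFinset] at h1
  have : Y = X \ {e} := le_antisymm h2 h1
  rwa [← this]

/-- A removable event is maximal. -/
lemma max_of_rem {X : Set E} {e : E} (hrem : X \ {e} ∈ 𝒞.C) :
    ∀ d ∈ X, ¬ CS.lt 𝒞 X e d := by
  intro d hd hlt
  have hde : d ≠ e := fun h => hlt.2 h.symm
  exact (hlt.1 (X \ {e}) hrem Set.diff_subset ⟨hd, hde⟩).2 rfl

end Max
end CS

namespace CS
variable {E₁ E₂ : Type u} {L : Type v}

/-- Forward step simulation for RDBs (one direction). -/
lemma fwd_sim (𝒞 : CS E₁ L) (𝒟 : CS E₂ L)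
    (h𝒞 : IsStable 𝒞) (h𝒟 : IsStable 𝒟) {R : Set E₁ → Set E₂ → Prop}
    (hR : IsRDB 𝒞 𝒟 R) :
    ∀ (n : ℕ) (F : Finset E₁) (X X' : Set E₁) (Y : Set E₂) (m : ℕ),
      F.card = n → R X Y → X ∈ 𝒞.C → X' ∈ 𝒞.C → X ⊆ X' → ↑F = X' \ X →
      (∀ d ∈ F, ∀ e ∈ F, CS.co 𝒞 X' d e) →
      (∀ f ∈ F, m ≤ CS.depth 𝒞 X' f) →
      ∃ (Y' : Set E₂) (G : Finset E₂), Y' ∈ 𝒟.C ∧ Y ⊆ Y' ∧ ↑G = Y' \ Y ∧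
        (∀ d ∈ G, ∀ e ∈ G, CS.co 𝒟 Y' d e) ∧
        G.val.map 𝒟.label = F.val.map 𝒞.label ∧ R X' Y' ∧
        (∀ h ∈ Y' \ Y, m ≤ CS.depth 𝒟 Y' h) := by
  classical
  intro n
  induction n with
  | zero =>
    intro F X X' Y m hcard hXY hXC hX'C hXX' hFcoe hconc hdep
    have hF : F = ∅ := Finset.card_eq_zero.mp hcard
    have hXX : X' = X := by
      have : X' \ X = ∅ := by rw [← hFcoe, hF]; simp
      have h1 : X' ⊆ X := Set.diff_eq_empty.mp this
      exact le_antisymm h1 hXX'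
    have hYC : Y ∈ 𝒟.C := (hR.1.1.2 X Y hXY).2
    refine ⟨Y, ∅, hYC, subset_rfl, by simp, by simp, by simp [hF], ?_, by simp⟩
    rwa [hXX]
  | succ n ih =>
    intro F X X' Y m hcard hXY hXC hX'C hXX' hFcoe hconc hdep
    have hFne : F.Nonempty := Finset.card_pos.mp (by omega)
    obtain ⟨f, hfF, hfmin⟩ := F.exists_min_image (CS.depth 𝒞 X') hFne
    set k := CS.depth 𝒞 X' f with hk
    set a := 𝒞.label f with ha
    have hfX' : f ∈ X' \ X := by rw [← hFcoe]; exact_mod_cast hfF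
    -- f is maximal in X'
    have hmaxf : ∀ h ∈ X', ¬ CS.lt 𝒞 X' f h := by
      refine max_of_conc 𝒞 hXC hXX' hfX' ?_
      intro d hd
      exact hconc f hfF d (by rw [← hFcoe] at hd; exact_mod_cast hd)
    set X'' := X' \ {f} with hX''def
    have hX''C : X'' ∈ 𝒞.C := remove_max 𝒞 h𝒞 hX'C hfX'.1 hmaxf
    have hXX'' : X ⊆ X'' := fun x hx =>
      ⟨hXX' hx, fun hxf => hfX'.2 (by rw [Set.mem_singleton_iff] at hxf; rwa [← hxf])⟩
    have hX''X' : X'' ⊆ X' := Set.diff_subset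
    have hF'coe : ↑(F.erase f) = X'' \ X := by
      rw [Finset.coe_erase, hFcoe, hX''def]
      ext x
      simp only [Set.mem_diff, Set.mem_singleton_iff]
      tauto
    have hF'mem : ∀ g ∈ F.erase f, g ∈ X'' \ X := by
      intro g hg; rw [← hF'coe]; exact_mod_cast hg
    have hconc'' : ∀ d ∈ F.erase f, ∀ e ∈ F.erase f, CS.co 𝒞 X'' d e := by
      intro d hd e he
      have hcode := hconc d (Finset.mem_of_mem_erase hd) e (Finset.mem_of_mem_erase he)
      constructor
      · exact fun hlt => hcode.1 (lt_up 𝒞 h𝒞 hX'C hX''C hX''X' (hF'mem e he).1 hlt)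
      · exact fun hlt => hcode.2 (lt_up 𝒞 h𝒞 hX'C hX''C hX''X' (hF'mem d hd).1 hlt)
    have hdep'' : ∀ g ∈ F.erase f, k ≤ CS.depth 𝒞 X'' g := by
      intro g hg
      have hgF := Finset.mem_of_mem_erase hg
      refine le_trans (hfmin g hgF) ?_
      refine depth_le_of_causes 𝒞 h𝒞 hX''C hX'C hX''X' (hF'mem g hg).1 ?_
      intro d hd hlt
      refine ⟨hd, fun hdf => ?_⟩
      rw [Set.mem_singleton_iff] at hdf
      subst hdf
      exact (hconc d hfF g hgF).1 hlt
    obtain ⟨Y'', G', hY''C, hYY'', hG'coe, hconcG', hmapG', hRY'', hdepY''⟩ :=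
      ih (F.erase f) X X'' Y k (by rw [Finset.card_erase_of_mem hfF, hcard]; rfl)
        hXY hXC hX''C hXX'' hF'coe hconc'' hdep''
    -- the single remaining transition
    have hdiff : X' \ X'' = {f} := by
      rw [hX''def]
      ext x
      simp only [Set.mem_diff, Set.mem_singleton_iff, not_and, not_not]
      constructor
      · rintro ⟨hx1, hx2⟩; exact hx2 hx1
      · rintro rfl; exact ⟨hfX'.1, fun _ => rfl⟩
    have htrans : FTransD 𝒞 a k X'' X' := ⟨hX''C, hX'C, hX''X', f, hdiff, rfl, rfl⟩
    obtain ⟨Y', hYtrans, hRY'⟩ := (hR.1.2 X'' Y'' hRY'').1 a k X' htrans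
    obtain ⟨-, hY'C, hY''Y', g, hgdiff, hglab, hgdep⟩ := hYtrans
    have hgmem : g ∈ Y' \ Y'' := by rw [hgdiff]; rfl
    have hgY' : g ∈ Y' := hgmem.1
    have hgY'' : g ∉ Y'' := hgmem.2
    have hgY : g ∉ Y := fun h => hgY'' (hYY'' h)
    have hG'sub : ∀ x ∈ G', x ∈ Y'' \ Y := by
      intro x hx; rw [← hG'coe]; exact_mod_cast hx
    have hgG' : g ∉ G' := fun h => hgY'' (hG'sub g h).1
    -- concurrency facts
    have hnew_max : ∀ h ∈ Y'', ¬ CS.lt 𝒟 Y' g h := by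
      intro h hh hlt
      exact hgY'' (hlt.1 Y'' hY''C hY''Y' hh)
    have hold_not_lt_g : ∀ h ∈ G', ¬ CS.lt 𝒟 Y' h g := by
      intro h hh hlt
      have hhY'' := (hG'sub h hh).1
      have h1 : CS.depth 𝒟 Y' h < CS.depth 𝒟 Y' g :=
        depth_lt_of_lt 𝒟 h𝒟 hY'C (hY''Y' hhY'') hgY' hlt
      have h2 : k ≤ CS.depth 𝒟 Y'' h := hdepY'' h (hG'sub h hh)
      have h3 : CS.depth 𝒟 Y'' h ≤ CS.depth 𝒟 Y' h :=
        depth_mono 𝒟 h𝒟 hY''C hY'C hY''Y' hhY''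
      omega
    have hconcG : ∀ d ∈ insert g G', ∀ e ∈ insert g G', CS.co 𝒟 Y' d e := by
      intro d hd e he
      rcases Finset.mem_insert.mp hd with hdg | hd2
      · rcases Finset.mem_insert.mp he with heg | he2
        · rw [hdg, heg]; exact co_refl' 𝒟 g
        · rw [hdg]; exact ⟨hnew_max e (hG'sub e he2).1, hold_not_lt_g e he2⟩
      · rcases Finset.mem_insert.mp he with heg | he2
        · rw [heg]; exact ⟨hold_not_lt_g d hd2, hnew_max d (hG'sub d hd2).1⟩
        · have hcode := hconcG' d hd2 e he2
          exact ⟨fun hlt => hcode.1 (lt_mono' 𝒟 hY''Y' hlt),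
            fun hlt => hcode.2 (lt_mono' 𝒟 hY''Y' hlt)⟩
    refine ⟨Y', insert g G', hY'C, hYY''.trans hY''Y', ?_, hconcG, ?_, hRY', ?_⟩
    · -- coe
      rw [Finset.coe_insert, hG'coe]
      ext x
      simp only [Set.mem_insert_iff, Set.mem_diff]
      constructor
      · rintro (rfl | ⟨h1, h2⟩)
        · exact ⟨hgY', hgY⟩
        · exact ⟨hY''Y' h1, h2⟩
      · rintro ⟨h1, h2⟩
        by_cases hx : x ∈ Y''
        · exact Or.inr ⟨hx, h2⟩
        · left
          have : x ∈ Y' \ Y'' := ⟨h1, hx⟩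
          rw [hgdiff] at this
          exact this
    · -- labels
      rw [Finset.insert_val, Multiset.ndinsert_of_notMem (by exact_mod_cast hgG'),
        Multiset.map_cons, hmapG', hglab]
      conv_rhs => rw [← Multiset.cons_erase (show f ∈ F.val from hfF)]
      rw [Multiset.map_cons, ← Finset.erase_val]
    · -- depth bound
      intro h hh
      by_cases hhg : h = g
      · subst hhg
        rw [hgdep]
        exact hdep f hfF
      · have hhY'' : h ∈ Y'' \ Y := by
          refine ⟨?_, hh.2⟩
          by_contra hnot
          have : h ∈ Y' \ Y'' := ⟨hh.1, hnot⟩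
          rw [hgdiff] at this
          exact hhg this
        calc m ≤ k := le_trans (hdep f hfF) le_rfl
          _ ≤ CS.depth 𝒟 Y'' h := hdepY'' h hhY''
          _ ≤ CS.depth 𝒟 Y' h := depth_mono 𝒟 h𝒟 hY''C hY'C hY''Y' hhY''.1

end CS

namespace CS
variable {E₁ E₂ : Type u} {L : Type v}

/-- Reverse step simulation for RDBs (one direction). -/
lemma rev_sim (𝒞 : CS E₁ L) (𝒟 : CS E₂ L)
    (h𝒞 : IsStable 𝒞) (h𝒟 : IsStable 𝒟) {R : Set E₁ → Set E₂ → Prop}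
    (hR : IsRDB 𝒞 𝒟 R) :
    ∀ (n : ℕ) (F : Finset E₁) (X X' : Set E₁) (Y : Set E₂) (m : ℕ),
      F.card = n → R X Y → X' ∈ 𝒞.C → X ∈ 𝒞.C → X' ⊆ X → ↑F = X \ X' →
      (∀ d ∈ F, ∀ e ∈ F, CS.co 𝒞 X d e) →
      (∀ f ∈ F, m ≤ CS.depth 𝒞 X f) →
      ∃ (Y' : Set E₂) (G : Finset E₂), Y' ∈ 𝒟.C ∧ Y' ⊆ Y ∧ ↑G = Y \ Y' ∧
        (∀ d ∈ G, ∀ e ∈ G, CS.co 𝒟 Y d e) ∧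
        G.val.map 𝒟.label = F.val.map 𝒞.label ∧ R X' Y' ∧
        (∀ h ∈ Y \ Y', m ≤ CS.depth 𝒟 Y h) := by
  classical
  intro n
  induction n with
  | zero =>
    intro F X X' Y m hcard hXY hX'C hXC hX'X hFcoe hconc hdep
    have hF : F = ∅ := Finset.card_eq_zero.mp hcard
    have hXX : X' = X := by
      have : X \ X' = ∅ := by rw [← hFcoe, hF]; simp
      exact le_antisymm hX'X (Set.diff_eq_empty.mp this)
    have hYC : Y ∈ 𝒟.C := (hR.1.1.2 X Y hXY).2
    refine ⟨Y, ∅, hYC, subset_rfl, by simp, by simp, by simp [hF], ?_, by simp⟩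
    rwa [hXX]
  | succ n ih =>
    intro F X X' Y m hcard hXY hX'C hXC hX'X hFcoe hconc hdep
    have hFne : F.Nonempty := Finset.card_pos.mp (by omega)
    obtain ⟨f, hfF, hfmin⟩ := F.exists_min_image (CS.depth 𝒞 X) hFne
    set k := CS.depth 𝒞 X f with hk
    set a := 𝒞.label f with ha
    have hfX : f ∈ X \ X' := by rw [← hFcoe]; exact_mod_cast hfF
    have hmaxf : ∀ h ∈ X, ¬ CS.lt 𝒞 X f h := by
      refine max_of_conc 𝒞 hX'C hX'X hfX ?_
      intro d hd
      exact hconc f hfF d (by rw [← hFcoe] at hd; exact_mod_cast hd)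
    set X₁ := X \ {f} with hX₁def
    have hX₁C : X₁ ∈ 𝒞.C := remove_max 𝒞 h𝒞 hXC hfX.1 hmaxf
    have hX₁X : X₁ ⊆ X := Set.diff_subset
    have hX'X₁ : X' ⊆ X₁ := fun x hx =>
      ⟨hX'X hx, fun hxf => hfX.2 (by rw [Set.mem_singleton_iff] at hxf; rwa [← hxf])⟩
    have hdiff : X \ X₁ = {f} := by
      rw [hX₁def]
      ext x
      simp only [Set.mem_diff, Set.mem_singleton_iff, not_and, not_not]
      constructor
      · rintro ⟨hx1, hx2⟩; exact hx2 hx1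
      · rintro rfl; exact ⟨hfX.1, fun _ => rfl⟩
    have htrans : RTransD 𝒞 a k X X₁ := ⟨hX₁C, hXC, hX₁X, f, hdiff, rfl, rfl⟩
    obtain ⟨Y₁, hYtrans, hRY₁⟩ := (hR.2 X Y hXY).1 a k X₁ htrans
    obtain ⟨hY₁C, hYC, hY₁Y, g, hgdiff, hglab, hgdep⟩ := hYtrans
    have hgmem : g ∈ Y \ Y₁ := by rw [hgdiff]; rfl
    have hgY : g ∈ Y := hgmem.1
    have hgY₁ : g ∉ Y₁ := hgmem.2
    have hY₁eq : Y₁ = Y \ {g} := by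
      ext x
      constructor
      · intro hx
        refine ⟨hY₁Y hx, fun hxg => ?_⟩
        rw [Set.mem_singleton_iff] at hxg
        exact hgY₁ (by rwa [hxg] at hx)
      · rintro ⟨hx1, hx2⟩
        by_contra hx3
        have : x ∈ Y \ Y₁ := ⟨hx1, hx3⟩
        rw [hgdiff] at this
        exact hx2 this
    have hmaxg : ∀ h ∈ Y, ¬ CS.lt 𝒟 Y g h :=
      max_of_rem 𝒟 (by rw [← hY₁eq]; exact hY₁C)
    -- recursion hypotheses
    have hF'coe : ↑(F.erase f) = X₁ \ X' := by
      rw [Finset.coe_erase, hFcoe, hX₁def]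
      ext x
      simp only [Set.mem_diff, Set.mem_singleton_iff]
      tauto
    have hF'mem : ∀ g' ∈ F.erase f, g' ∈ X₁ \ X' := by
      intro g' hg'; rw [← hF'coe]; exact_mod_cast hg'
    have hconc₁ : ∀ d ∈ F.erase f, ∀ e ∈ F.erase f, CS.co 𝒞 X₁ d e := by
      intro d hd e he
      have hcode := hconc d (Finset.mem_of_mem_erase hd) e (Finset.mem_of_mem_erase he)
      constructor
      · exact fun hlt => hcode.1 (lt_up 𝒞 h𝒞 hXC hX₁C hX₁X (hF'mem e he).1 hlt)
      · exact fun hlt => hcode.2 (lt_up 𝒞 h𝒞 hXC hX₁C hX₁X (hF'mem d hd).1 hlt)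
    have hdep₁ : ∀ g' ∈ F.erase f, k ≤ CS.depth 𝒞 X₁ g' := by
      intro g' hg'
      have hg'F := Finset.mem_of_mem_erase hg'
      refine le_trans (hfmin g' hg'F) ?_
      refine depth_le_of_causes 𝒞 h𝒞 hX₁C hXC hX₁X (hF'mem g' hg').1 ?_
      intro d hd hlt
      refine ⟨hd, fun hdf => ?_⟩
      rw [Set.mem_singleton_iff] at hdf
      subst hdf
      exact (hconc d hfF g' hg'F).1 hlt
    obtain ⟨Y', G', hY'C, hY'Y₁, hG'coe, hconcG', hmapG', hRY', hdepY'⟩ :=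
      ih (F.erase f) X₁ X' Y₁ k (by rw [Finset.card_erase_of_mem hfF, hcard]; rfl)
        hRY₁ hX'C hX₁C hX'X₁ hF'coe hconc₁ hdep₁
    have hG'sub : ∀ x ∈ G', x ∈ Y₁ \ Y' := by
      intro x hx; rw [← hG'coe]; exact_mod_cast hx
    have hgG' : g ∉ G' := fun h => hgY₁ (hG'sub g h).1
    have hold_not_lt_g : ∀ h ∈ G', ¬ CS.lt 𝒟 Y h g := by
      intro h hh hlt
      have hhY₁ := (hG'sub h hh).1
      have h1 : CS.depth 𝒟 Y h < CS.depth 𝒟 Y g :=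
        depth_lt_of_lt 𝒟 h𝒟 hYC (hY₁Y hhY₁) hgY hlt
      have h2 : k ≤ CS.depth 𝒟 Y₁ h := hdepY' h (hG'sub h hh)
      have h3 : CS.depth 𝒟 Y₁ h ≤ CS.depth 𝒟 Y h :=
        depth_mono 𝒟 h𝒟 hY₁C hYC hY₁Y hhY₁
      omega
    have hconcG : ∀ d ∈ insert g G', ∀ e ∈ insert g G', CS.co 𝒟 Y d e := by
      intro d hd e he
      rcases Finset.mem_insert.mp hd with hdg | hd2
      · rcases Finset.mem_insert.mp he with heg | he2
        · rw [hdg, heg]; exact co_refl' 𝒟 g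
        · rw [hdg]
          exact ⟨hmaxg e (hY₁Y (hG'sub e he2).1), hold_not_lt_g e he2⟩
      · rcases Finset.mem_insert.mp he with heg | he2
        · rw [heg]
          exact ⟨hold_not_lt_g d hd2, hmaxg d (hY₁Y (hG'sub d hd2).1)⟩
        · have hcode := hconcG' d hd2 e he2
          exact ⟨fun hlt => hcode.1 (lt_mono' 𝒟 hY₁Y hlt),
            fun hlt => hcode.2 (lt_mono' 𝒟 hY₁Y hlt)⟩
    refine ⟨Y', insert g G', hY'C, hY'Y₁.trans hY₁Y, ?_, hconcG, ?_, hRY', ?_⟩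
    · rw [Finset.coe_insert, hG'coe]
      ext x
      simp only [Set.mem_insert_iff, Set.mem_diff]
      constructor
      · rintro (rfl | ⟨h1, h2⟩)
        · exact ⟨hgY, fun h => hgY₁ (hY'Y₁ h)⟩
        · exact ⟨hY₁Y h1, h2⟩
      · rintro ⟨h1, h2⟩
        by_cases hx : x ∈ Y₁
        · exact Or.inr ⟨hx, h2⟩
        · left
          have : x ∈ Y \ Y₁ := ⟨h1, hx⟩
          rw [hgdiff] at this
          exact this
    · rw [Finset.insert_val, Multiset.ndinsert_of_notMem (by exact_mod_cast hgG'),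
        Multiset.map_cons, hmapG', hglab]
      conv_rhs => rw [← Multiset.cons_erase (show f ∈ F.val from hfF)]
      rw [Multiset.map_cons, ← Finset.erase_val]
    · intro h hh
      by_cases hhg : h = g
      · subst hhg
        rw [hgdep]
        exact hdep f hfF
      · have hhY₁ : h ∈ Y₁ \ Y' := by
          refine ⟨?_, hh.2⟩
          by_contra hnot
          have : h ∈ Y \ Y₁ := ⟨hh.1, hnot⟩
          rw [hgdiff] at this
          exact hhg this
        calc m ≤ k := hdep f hfF
          _ ≤ CS.depth 𝒟 Y₁ h := hdepY' h hhY₁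
          _ ≤ CS.depth 𝒟 Y h := depth_mono 𝒟 h𝒟 hY₁C hYC hY₁Y hhY₁.1

end CS

namespace CS
variable {E₁ E₂ : Type u} {L : Type v}

lemma rdb_flip {𝒞 : CS E₁ L} {𝒟 : CS E₂ L} {R : Set E₁ → Set E₂ → Prop}
    (h : IsRDB 𝒞 𝒟 R) : IsRDB 𝒟 𝒞 (fun Y X => R X Y) := by
  obtain ⟨⟨⟨hdom0, hdom⟩, hdb⟩, hrdb⟩ := h
  exact ⟨⟨⟨hdom0, fun Y X hx => ⟨(hdom X Y hx).2, (hdom X Y hx).1⟩⟩,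
    fun Y X hx => ⟨(hdb X Y hx).2, (hdb X Y hx).1⟩⟩,
    fun Y X hx => ⟨(hrdb X Y hx).2, (hrdb X Y hx).1⟩⟩

lemma rdb_to_rsb {𝒞 : CS E₁ L} {𝒟 : CS E₂ L}
    (h𝒞 : IsStable 𝒞) (h𝒟 : IsStable 𝒟) (R : Set E₁ → Set E₂ → Prop)
    (hR : IsRDB 𝒞 𝒟 R) : IsRSB 𝒞 𝒟 R := by
  have hdom := hR.1.1
  refine ⟨⟨hdom, fun X Y hXY => ⟨?_, ?_⟩⟩, fun X Y hXY => ⟨?_, ?_⟩⟩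
  · -- forward steps, left to right
    rintro A X' ⟨hXC, hX'C, hXX', F, hFcoe, hconc, hmap⟩
    obtain ⟨Y', G, hY'C, hYY', hGcoe, hconcG, hmapG, hRY', -⟩ :=
      fwd_sim 𝒞 𝒟 h𝒞 h𝒟 hR F.card F X X' Y 0 rfl hXY hXC hX'C hXX' hFcoe hconc
        (fun f _ => Nat.zero_le _)
    exact ⟨Y', ⟨(hdom.2 X Y hXY).2, hY'C, hYY', G, hGcoe, hconcG,
      by rw [hmapG, hmap]⟩, hRY'⟩
  · -- forward steps, right to left
    rintro A Y' ⟨hYC, hY'C, hYY', G, hGcoe, hconc, hmap⟩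
    obtain ⟨X', F, hX'C, hXX', hFcoe, hconcF, hmapF, hRX', -⟩ :=
      fwd_sim 𝒟 𝒞 h𝒟 h𝒞 (rdb_flip hR) G.card G Y Y' X 0 rfl hXY hYC hY'C hYY'
        hGcoe hconc (fun f _ => Nat.zero_le _)
    exact ⟨X', ⟨(hdom.2 X Y hXY).1, hX'C, hXX', F, hFcoe, hconcF,
      by rw [hmapF, hmap]⟩, hRX'⟩
  · -- reverse steps, left to right
    rintro A X' ⟨hX'C, hXC, hX'X, F, hFcoe, hconc, hmap⟩
    obtain ⟨Y', G, hY'C, hY'Y, hGcoe, hconcG, hmapG, hRY', -⟩ :=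
      rev_sim 𝒞 𝒟 h𝒞 h𝒟 hR F.card F X X' Y 0 rfl hXY hX'C hXC hX'X hFcoe hconc
        (fun f _ => Nat.zero_le _)
    exact ⟨Y', ⟨hY'C, (hdom.2 X Y hXY).2, hY'Y, G, hGcoe, hconcG,
      by rw [hmapG, hmap]⟩, hRY'⟩
  · -- reverse steps, right to left
    rintro A Y' ⟨hY'C, hYC, hY'Y, G, hGcoe, hconc, hmap⟩
    obtain ⟨X', F, hX'C, hX'X, hFcoe, hconcF, hmapF, hRX', -⟩ :=
      rev_sim 𝒟 𝒞 h𝒟 h𝒞 (rdb_flip hR) G.card G Y Y' X 0 rfl hXY hY'C hYC hY'Y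
        hGcoe hconc (fun f _ => Nat.zero_le _)
    exact ⟨X', ⟨hX'C, (hdom.2 X Y hXY).1, hX'X, F, hFcoe, hconcF,
      by rw [hmapF, hmap]⟩, hRX'⟩

end CS

open CS

/-- every reverse depth-respecting bisimulation is a reverse step
bisimulation; hence RDB equivalence is included in RSB equivalence. -/
theorem stmt11 {E₁ E₂ : Type u} {L : Type v} (𝒞 : CS E₁ L) (𝒟 : CS E₂ L)
    (h𝒞 : IsStable 𝒞) (h𝒟 : IsStable 𝒟) :
    (∀ R : Set E₁ → Set E₂ → Prop, IsRDB 𝒞 𝒟 R → IsRSB 𝒞 𝒟 R) ∧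
    ((∃ R : Set E₁ → Set E₂ → Prop, IsRDB 𝒞 𝒟 R) →
      (∃ R : Set E₁ → Set E₂ → Prop, IsRSB 𝒞 𝒟 R)) := by
  refine ⟨fun R hR => CS.rdb_to_rsb h𝒞 h𝒟 R hR, ?_⟩
  rintro ⟨R, hR⟩
  exact ⟨R, CS.rdb_to_rsb h𝒞 h𝒟 R hR⟩
end
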